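/- Let C be a set of complex structures on ℝ^{2n} with C = -C, and let Ω ⊆ W_C := ⋃_{I∈C} ℂ_I (with ℂ_I := ℝ + ℝI ⊆ End(ℝ^{2n})) be axially symmetric, i.e. x + yI ∈ Ω implies x + yJ ∈ Ω for all J ∈ C. If f : Ω → ℝ^{2n} is path-slice, then f is a slice function: there exists F : Ω_s → (ℝ^{2n})² with f(x + yI) = F₁(x+yi) + I F₂(x+yi) for all x + yI ∈ Ω, provided Ω is a slice-domain (slice-open and slice-connected). -/

import Mathlib

/-- Embedding of `ℂ` into the slice `ℝ + ℝI ⊆ End(ℝ^{2n})`. -/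
noncomputable def injE (n : ℕ) (I : Module.End ℝ (Fin (2 * n) → ℝ)) (z : ℂ) :
    Module.End ℝ (Fin (2 * n) → ℝ) :=
  z.re • 1 + z.im • I

/-- The slice topology on `End(ℝ^{2n})` associated with a set `C` of complex
structures: a set is open iff its preimage under every chart `ℂ → ℂ_I` is open. -/
noncomputable def sliceTopologyC (n : ℕ)
    (C : Set (Module.End ℝ (Fin (2 * n) → ℝ))) :
    TopologicalSpace (Module.End ℝ (Fin (2 * n) → ℝ)) :=
  ⨆ I ∈ C, TopologicalSpace.coinduced (injE n I) inferInstance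

section helpers
variable {n : ℕ}

private lemma scalar_eq (hn : n ≠ 0) {s t : ℝ}
    (h : s • (1 : Module.End ℝ (Fin (2 * n) → ℝ)) = t • 1) : s = t := by
  have h2 := DFunLike.congr_fun h (fun _ => (1:ℝ))
  have h3 := congrFun h2 ⟨0, by omega⟩
  simpa using h3

private lemma no_sqrt (hn : n ≠ 0) (t : ℝ) :
    (t • (1 : Module.End ℝ (Fin (2 * n) → ℝ))) * (t • 1) ≠ -1 := by
  intro h
  rw [smul_mul_smul_comm, one_mul] at h
  have h1 : (t*t) • (1 : Module.End ℝ (Fin (2 * n) → ℝ)) = (-1 : ℝ) • 1 := by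
    rw [h]; module
  have := scalar_eq hn h1
  nlinarith

private lemma no_scalar_cstr (hn : n ≠ 0) {c s : ℝ} {K : Module.End ℝ (Fin (2*n) → ℝ)}
    (hc : c ≠ 0) (hK : K * K = -1) (h : c • K = s • 1) : False := by
  have hK' : K = (c⁻¹ * s) • 1 := by
    rw [mul_smul, ← h, inv_smul_smul₀ hc]
  exact no_sqrt hn _ (by rw [← hK']; exact hK)

private lemma I_ne_zero (hn : n ≠ 0) {I : Module.End ℝ (Fin (2*n) → ℝ)}
    (hI : I * I = -1) : I ≠ 0 := by
  rintro rfl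
  rw [mul_zero] at hI
  have h2 : (0:ℝ) • (1 : Module.End ℝ (Fin (2*n) → ℝ)) = (-1:ℝ) • 1 := by
    rw [zero_smul, hI]; module
  have := scalar_eq hn h2
  norm_num at this

private lemma injE_conj (I : Module.End ℝ (Fin (2*n) → ℝ)) (z : ℂ) :
    injE n I ((starRingEnd ℂ) z) = injE n (-I) z := by
  unfold injE
  rw [Complex.conj_re, Complex.conj_im]; module

private lemma dir_eq (hn : n ≠ 0) {I K : Module.End ℝ (Fin (2*n) → ℝ)} {z : ℂ}
    (him : z.im ≠ 0) (h : injE n I z = injE n K z) : I = K := by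
  unfold injE at h
  have h2 : z.im • I = z.im • K := by
    have := add_left_cancel h
    exact this
  have := congrArg (fun T => (z.im)⁻¹ • T) h2
  simpa [inv_smul_smul₀ him] using this

private lemma two_rep (hn : n ≠ 0) {I J : Module.End ℝ (Fin (2*n) → ℝ)}
    (hI : I * I = -1) (hJ : J * J = -1) {z w : ℂ}
    (h : injE n I z = injE n J w) : w = z ∨ w = (starRingEnd ℂ) z := by
  set a := z.re - w.re with ha
  set b := z.im with hb
  set c := w.im with hc
  have h1 : a • (1 : Module.End ℝ (Fin (2*n) → ℝ)) + b • I = c • J := by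
    unfold injE at h
    rw [ha, hb, hc]
    linear_combination (norm := module) h
  by_cases hbz : b = 0
  · -- z is real
    rw [hbz, zero_smul, add_zero] at h1
    by_cases hcz : c = 0
    · rw [hcz, zero_smul] at h1
      have ha0 : a = 0 := by
        have h2 : a • (1 : Module.End ℝ (Fin (2*n) → ℝ)) = (0:ℝ) • 1 := by
          rw [h1, zero_smul]
        exact scalar_eq hn h2
      left
      apply Complex.ext
      · have : z.re - w.re = 0 := ha ▸ ha0
        linarith
      · rw [← hc, ← hb] at *; rw [hcz, hbz]
    · exact (no_scalar_cstr hn hcz hJ h1.symm).elim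
  · -- z not real; first show a = 0
    have hA : a = 0 := by
      by_contra hA
      have hsq : (a • (1 : Module.End ℝ (Fin (2*n) → ℝ)) + b • I) * (a • 1 + b • I)
          = (c • J) * (c • J) := by rw [h1]
      have hL : (a • (1 : Module.End ℝ (Fin (2*n) → ℝ)) + b • I) * (a • 1 + b • I)
          = ((a*a) • 1 + (a*b) • I) + ((b*a) • I + (b*b) • (I*I)) := by
        rw [add_mul, mul_add, mul_add, smul_mul_smul_comm, smul_mul_smul_comm,
          smul_mul_smul_comm, smul_mul_smul_comm, one_mul, mul_one, one_mul]
      have hR : (c • J) * (c • J) = (c*c) • (J*J) := smul_mul_smul_comm c J c J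
      have hexp : ((a*a) • (1 : Module.End ℝ (Fin (2*n) → ℝ)) + (a*b) • I)
          + ((b*a) • I + (b*b) • (I*I)) = (c*c) • (J*J) := by
        rw [← hL, hsq, hR]
      rw [hI, hJ] at hexp
      have h3 : (2*(a*b)) • I = (b*b - a*a - c*c) • (1 : Module.End ℝ (Fin (2*n) → ℝ)) := by
        linear_combination (norm := module) hexp
      exact no_scalar_cstr hn (mul_ne_zero two_ne_zero (mul_ne_zero hA hbz)) hI h3
    rw [hA, zero_smul, zero_add] at h1
    by_cases hcz : c = 0
    · rw [hcz, zero_smul] at h1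
      have hI0 : I = 0 := by
        have := congrArg (fun T => b⁻¹ • T) h1
        simpa [inv_smul_smul₀ hbz] using this
      exact absurd hI0 (I_ne_zero hn hI)
    · -- b • I = c • J, both nonzero
      have hIJ : I = (b⁻¹ * c) • J := by
        rw [mul_smul, ← h1, inv_smul_smul₀ hbz]
      have hsc : ((b⁻¹*c)*(b⁻¹*c)) • (1 : Module.End ℝ (Fin (2*n) → ℝ)) = (1:ℝ) • 1 := by
        have h4 : ((b⁻¹*c) • J) * ((b⁻¹*c) • J) = -1 := by rw [← hIJ]; exact hI
        rw [smul_mul_smul_comm, hJ] at h4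
        have h5 := congrArg (fun T => -T) h4
        simp only [smul_neg, neg_neg] at h5
        rw [h5, one_smul]
      have h6 : (b⁻¹*c)*(b⁻¹*c) = 1 := scalar_eq hn hsc
      have h7 : c = b ∨ c = -b := by
        rcases mul_eq_zero.mp (show (b⁻¹*c - 1)*(b⁻¹*c + 1) = 0 by ring_nf; nlinarith) with h8 | h8
        · left
          field_simp at h8
          linarith
        · right
          field_simp at h8
          linarith
      have hre : w.re = z.re := by
        have : z.re - w.re = 0 := ha ▸ hA
        linarith
      rcases h7 with h8 | h8
      · left; apply Complex.ext
        · exact hre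
        · rw [← hc, ← hb] at *; rw [h8]
      · right; apply Complex.ext
        · simpa using hre
        · simp only [Complex.conj_im]
          rw [← hc, ← hb] at *; rw [h8]

private lemma I_ne_neg (hn : n ≠ 0) {I : Module.End ℝ (Fin (2*n) → ℝ)}
    (hI : I * I = -1) : I ≠ -I := by
  intro h
  apply I_ne_zero hn hI
  have h3 : I + I = 0 := by nth_rewrite 2 [h]; exact add_neg_cancel I
  have h4 : (2:ℝ) • I = 0 := by rw [two_smul]; exact h3
  have := congrArg (fun T => (2:ℝ)⁻¹ • T) h4
  simpa [inv_smul_smul₀ (two_ne_zero (α := ℝ))] using this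

private lemma injE_inj (hn : n ≠ 0) {I : Module.End ℝ (Fin (2*n) → ℝ)}
    (hI : I * I = -1) {z w : ℂ} (h : injE n I z = injE n I w) : z = w := by
  rcases two_rep hn hI hI h with h1 | h1
  · exact h1.symm
  · by_cases him : z.im = 0
    · rw [h1, Complex.conj_eq_iff_im.mpr him]
    · rw [h1, injE_conj] at h
      exact absurd (dir_eq hn him h) (I_ne_neg hn hI)

private lemma isOpen_slice_iff {C : Set (Module.End ℝ (Fin (2*n) → ℝ))}
    {s : Set (Module.End ℝ (Fin (2*n) → ℝ))} :
    @IsOpen _ (sliceTopologyC n C) s ↔ ∀ I ∈ C, IsOpen (injE n I ⁻¹' s) := by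
  unfold sliceTopologyC
  simp only [isOpen_iSup_iff, isOpen_coinduced]

end helpers

/-- On an axially symmetric slice-domain `Ω ⊆ W_C`, every path-slice function
`f : Ω → ℝ^{2n}` is a slice function. -/
theorem slice_of_pathSlice_on_axially_symmetric (n : ℕ)
    (C : Set (Module.End ℝ (Fin (2 * n) → ℝ)))
    (hC : ∀ I ∈ C, I * I = -1) (hCneg : ∀ I ∈ C, -I ∈ C)
    (Ω : Set (Module.End ℝ (Fin (2 * n) → ℝ)))
    (hΩW : Ω ⊆ ⋃ I ∈ C, Set.range (injE n I))
    (haxial : ∀ z : ℂ, ∀ I ∈ C, injE n I z ∈ Ω → ∀ J ∈ C, injE n J z ∈ Ω)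
    (hopen : @IsOpen _ (sliceTopologyC n C) Ω)
    (hconn : @IsConnected _ (sliceTopologyC n C) Ω)
    (f : Module.End ℝ (Fin (2 * n) → ℝ) → (Fin (2 * n) → ℝ))
    (hps : ∀ γ : Set.Icc (0 : ℝ) 1 → ℂ, Continuous γ →
      (γ ⟨0, by norm_num⟩).im = 0 →
      (∃ I ∈ C, ∀ t, injE n I (γ t) ∈ Ω) →
      ∃ F₁ F₂ : Fin (2 * n) → ℝ, ∀ I ∈ C, (∀ t, injE n I (γ t) ∈ Ω) →
        f (injE n I (γ ⟨1, by norm_num⟩)) = F₁ + I F₂) :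
    ∃ F : ℂ → (Fin (2 * n) → ℝ) × (Fin (2 * n) → ℝ),
      ∀ z : ℂ, ∀ I ∈ C, injE n I z ∈ Ω →
        f (injE n I z) = (F z).1 + I ((F z).2) := by
  classical
  by_cases hn0 : n = 0
  · subst hn0
    haveI : Subsingleton (Fin (2 * 0) → ℝ) :=
      ⟨fun a b => funext fun i => absurd i.2 (by omega)⟩
    exact ⟨fun _ => (0, 0), fun z I hI hz => Subsingleton.elim _ _⟩
  · have hn' : n ≠ 0 := hn0
    obtain ⟨w₀, hw₀⟩ := hconn.1
    obtain ⟨I₀, hI₀, z₁, hz₁⟩ : ∃ I ∈ C, ∃ z : ℂ, injE n I z = w₀ := by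
      have h := hΩW hw₀
      simp only [Set.mem_iUnion, Set.mem_range] at h
      obtain ⟨I, hI, z, hz⟩ := h
      exact ⟨I, hI, z, hz⟩
    have hI₀sq : I₀ * I₀ = -1 := hC I₀ hI₀
    set U : Set ℂ := injE n I₀ ⁻¹' Ω with hUdef
    have hUopen : IsOpen U := isOpen_slice_iff.mp hopen I₀ hI₀
    have hUax : ∀ z ∈ U, ∀ J ∈ C, injE n J z ∈ Ω := fun z hz J hJ =>
      haxial z I₀ hI₀ hz J hJ
    have hUax' : ∀ (z : ℂ) (J), J ∈ C → injE n J z ∈ Ω → z ∈ U := fun z J hJ h =>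
      haxial z J hJ h I₀ hI₀
    have hΩpre : ∀ J ∈ C, injE n J ⁻¹' Ω = U := by
      intro J hJ
      ext z
      exact ⟨fun h => hUax' z J hJ h, fun h => hUax z h J hJ⟩
    have hUconj : ∀ z ∈ U, (starRingEnd ℂ) z ∈ U := by
      intro z hz
      show injE n I₀ ((starRingEnd ℂ) z) ∈ Ω
      rw [injE_conj]
      exact hUax z hz (-I₀) (hCneg I₀ hI₀)
    have hz₁U : z₁ ∈ U := hUax' z₁ I₀ hI₀ (hz₁ ▸ hw₀)
    -- Step 1 : U contains a real point
    have hreal : ∃ x : ℝ, ((x : ℂ)) ∈ U := by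
      by_contra hre
      push_neg at hre
      have him : ∀ z ∈ U, z.im ≠ 0 := by
        intro z hz h0
        exact hre z.re (by rwa [show ((z.re : ℝ) : ℂ) = z from
          Complex.ext (Complex.ofReal_re _) (by simp [h0])])
      obtain ⟨zp, hzpU, hzp⟩ : ∃ zp, zp ∈ U ∧ 0 < zp.im := by
        rcases lt_or_gt_of_ne (him z₁ hz₁U) with h | h
        · refine ⟨(starRingEnd ℂ) z₁, hUconj z₁ hz₁U, ?_⟩
          simp only [Complex.conj_im]
          linarith
        · exact ⟨z₁, hz₁U, h⟩
      set u : Set (Module.End ℝ (Fin (2 * n) → ℝ)) :=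
        injE n I₀ '' {z | z ∈ U ∧ 0 < z.im} with hu
      have hpre : ∀ J ∈ C, injE n J ⁻¹' u =
          (if J = I₀ then {z | z ∈ U ∧ 0 < z.im} else ∅) ∪
          (if J = -I₀ then {z | z ∈ U ∧ z.im < 0} else ∅) := by
        intro J hJ
        have hJsq := hC J hJ
        ext z
        simp only [Set.mem_preimage, Set.mem_union, Set.mem_setOf_eq, hu, Set.mem_image]
        constructor
        · rintro ⟨w, ⟨hwU, hwim⟩, heq⟩
          rcases two_rep hn' hI₀sq hJsq heq with h1 | h1
          · -- h1 : z = w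
            have hzim : 0 < z.im := by rw [h1]; exact hwim
            have heq' : injE n I₀ z = injE n J z := by rw [← h1] at heq; exact heq
            have hJI : I₀ = J := dir_eq hn' (ne_of_gt hzim) heq'
            exact Or.inl (by rw [if_pos hJI.symm]; exact ⟨by rw [h1]; exact hwU, hzim⟩)
          · -- h1 : z = conj w
            have hwz : w = (starRingEnd ℂ) z := by rw [h1, Complex.conj_conj]
            have hzU : z ∈ U := by
              have h2 := hUconj w hwU
              rwa [hwz, Complex.conj_conj] at h2
            have hzim : z.im < 0 := by
              rw [h1]
              simp only [Complex.conj_im]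
              linarith
            have heq' : injE n (-I₀) z = injE n J z := by
              rw [← injE_conj, ← hwz]; exact heq
            have hJI : -I₀ = J := dir_eq hn' (ne_of_lt hzim) heq'
            exact Or.inr (by rw [if_pos hJI.symm]; exact ⟨hzU, hzim⟩)
        · intro hm
          rcases hm with hm | hm
          · by_cases hJI : J = I₀
            · rw [if_pos hJI] at hm
              subst hJI
              exact ⟨z, hm, rfl⟩
            · rw [if_neg hJI] at hm
              exact hm.elim
          · by_cases hJN : J = -I₀
            · rw [if_pos hJN] at hm
              obtain ⟨hzU, hzim⟩ := hm
              refine ⟨(starRingEnd ℂ) z, ⟨hUconj z hzU, ?_⟩, ?_⟩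
              · simp only [Complex.conj_im]
                linarith
              · rw [injE_conj, ← hJN]
            · rw [if_neg hJN] at hm
              exact hm.elim
      have hposopen : IsOpen {z : ℂ | z ∈ U ∧ 0 < z.im} := by
        have : {z : ℂ | z ∈ U ∧ 0 < z.im} = U ∩ Complex.im ⁻¹' Set.Ioi 0 := rfl
        rw [this]
        exact hUopen.inter (isOpen_Ioi.preimage Complex.continuous_im)
      have hnegopen : IsOpen {z : ℂ | z ∈ U ∧ z.im < 0} := by
        have : {z : ℂ | z ∈ U ∧ z.im < 0} = U ∩ Complex.im ⁻¹' Set.Iio 0 := rfl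
        rw [this]
        exact hUopen.inter (isOpen_Iio.preimage Complex.continuous_im)
      have huopen : @IsOpen _ (sliceTopologyC n C) u := by
        rw [isOpen_slice_iff]
        intro J hJ
        rw [hpre J hJ]
        refine IsOpen.union ?_ ?_ <;> split_ifs <;>
          first
            | exact isOpen_empty
            | exact hposopen
            | exact hnegopen
      have hvopen : @IsOpen _ (sliceTopologyC n C) (Ω \ u) := by
        rw [isOpen_slice_iff]
        intro J hJ
        have hd : injE n J ⁻¹' (Ω \ u) = U \ (injE n J ⁻¹' u) := by
          rw [Set.preimage_diff, hΩpre J hJ]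
        rw [hd, hpre J hJ]
        split_ifs with h1 h2
        · exact absurd (h1.symm.trans h2) (I_ne_neg hn' hI₀sq)
        · have : U \ ({z : ℂ | z ∈ U ∧ 0 < z.im} ∪ ∅) = {z : ℂ | z ∈ U ∧ z.im < 0} := by
            ext z
            simp only [Set.mem_diff, Set.union_empty, Set.mem_setOf_eq]
            constructor
            · rintro ⟨hzU, hz⟩
              refine ⟨hzU, ?_⟩
              rcases lt_or_gt_of_ne (him z hzU) with h | h
              · exact h
              · exact absurd ⟨hzU, h⟩ hz
            · rintro ⟨hzU, hz⟩
              exact ⟨hzU, fun hm => by linarith [hm.2]⟩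
          rw [this]
          exact hnegopen
        · rename_i h2'
          have : U \ (∅ ∪ {z : ℂ | z ∈ U ∧ z.im < 0}) = {z : ℂ | z ∈ U ∧ 0 < z.im} := by
            ext z
            simp only [Set.mem_diff, Set.empty_union, Set.mem_setOf_eq]
            constructor
            · rintro ⟨hzU, hz⟩
              refine ⟨hzU, ?_⟩
              rcases lt_or_gt_of_ne (him z hzU) with h | h
              · exact absurd ⟨hzU, h⟩ hz
              · exact h
            · rintro ⟨hzU, hz⟩
              exact ⟨hzU, fun hm => by linarith [hm.2]⟩
          rw [this]
          exact hposopen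
        · simp only [Set.union_empty, Set.diff_empty]
          exact hUopen
      have hsub : Ω ⊆ u ∪ (Ω \ u) := fun w hw => by
        by_cases h : w ∈ u
        · exact Or.inl h
        · exact Or.inr ⟨hw, h⟩
      have hne1 : (Ω ∩ u).Nonempty :=
        ⟨injE n I₀ zp, hzpU, ⟨zp, ⟨hzpU, hzp⟩, rfl⟩⟩
      have hne2 : (Ω ∩ (Ω \ u)).Nonempty := by
        refine ⟨injE n I₀ ((starRingEnd ℂ) zp), hUconj zp hzpU, hUconj zp hzpU, ?_⟩
        rintro ⟨w, ⟨hwU, hwim⟩, heq⟩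
        have hwe := injE_inj hn' hI₀sq heq
        rw [hwe] at hwim
        simp only [Complex.conj_im] at hwim
        linarith
      obtain ⟨w, -, hwu, hwv⟩ := hconn.2 u (Ω \ u) huopen hvopen hsub hne1 hne2
      exact hwv.2 hwu
    obtain ⟨x₀, hx₀⟩ := hreal
    -- Step 2 : every point of U is joined to a real point within U
    set R : Set ℂ := ⋃ x : ℝ, pathComponentIn U ((x : ℂ)) with hRdef
    have hRmem : ∀ z : ℂ, z ∈ R ↔ ∃ x : ℝ, JoinedIn U ((x : ℂ)) z := by
      intro z
      simp only [hRdef, Set.mem_iUnion]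
      exact Iff.rfl
    have hRopen : IsOpen R := isOpen_iUnion fun x => hUopen.pathComponentIn _
    have hRconj : ∀ z ∈ R, (starRingEnd ℂ) z ∈ R := by
      intro z hz
      obtain ⟨x, hx⟩ := (hRmem z).mp hz
      refine (hRmem _).mpr ⟨x, ?_⟩
      obtain ⟨γ, hγ⟩ := hx
      have hJ : JoinedIn U ((starRingEnd ℂ) ((x : ℂ))) ((starRingEnd ℂ) z) := by
        refine ⟨γ.map Complex.continuous_conj, fun t => ?_⟩
        simp only [Path.map_coe, Function.comp_apply]
        exact hUconj _ (hγ t)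
      rwa [Complex.conj_ofReal] at hJ
    set A : Set (Module.End ℝ (Fin (2 * n) → ℝ)) :=
      {w | ∃ z ∈ R, ∃ I ∈ C, injE n I z = w} with hAdef
    have hApre : ∀ J ∈ C, injE n J ⁻¹' A = R := by
      intro J hJ
      ext z
      simp only [Set.mem_preimage, hAdef, Set.mem_setOf_eq]
      constructor
      · rintro ⟨z', hz', I, hI, heq⟩
        rcases two_rep hn' (hC I hI) (hC J hJ) heq with h1 | h1
        · rwa [h1]
        · rw [h1]
          exact hRconj z' hz'
      · intro hz
        exact ⟨z, hz, J, hJ, rfl⟩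
    have hAopen : @IsOpen _ (sliceTopologyC n C) A :=
      isOpen_slice_iff.mpr fun J hJ => by rw [hApre J hJ]; exact hRopen
    have hcompl_open : IsOpen (U \ R) := by
      have heq : U \ R = ⋃ (z : ℂ) (_ : z ∈ U \ R), pathComponentIn U z := by
        ext w
        simp only [Set.mem_iUnion]
        constructor
        · intro hw
          exact ⟨w, hw, mem_pathComponentIn_self hw.1⟩
        · rintro ⟨z, hz, hw⟩
          have hwU : w ∈ U := pathComponentIn_subset hw
          refine ⟨hwU, fun hwR => hz.2 ?_⟩
          obtain ⟨x, hx⟩ := (hRmem w).mp hwR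
          exact (hRmem z).mpr ⟨x, hx.trans (JoinedIn.symm hw)⟩
      rw [heq]
      exact isOpen_iUnion fun z => isOpen_iUnion fun _ => hUopen.pathComponentIn _
    have hBopen : @IsOpen _ (sliceTopologyC n C) (Ω \ A) := by
      refine isOpen_slice_iff.mpr fun J hJ => ?_
      have heq : injE n J ⁻¹' (Ω \ A) = U \ R := by
        rw [Set.preimage_diff, hΩpre J hJ, hApre J hJ]
      rw [heq]
      exact hcompl_open
    have hUR : U ⊆ R := by
      have hAne : (Ω ∩ A).Nonempty :=
        ⟨injE n I₀ ((x₀ : ℂ)), hx₀,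
          ⟨(x₀ : ℂ), (hRmem _).mpr ⟨x₀, JoinedIn.refl hx₀⟩, I₀, hI₀, rfl⟩⟩
      by_cases hBne : (Ω \ A).Nonempty
      · have hsub : Ω ⊆ A ∪ (Ω \ A) := fun w hw => by
          by_cases h : w ∈ A
          · exact Or.inl h
          · exact Or.inr ⟨hw, h⟩
        obtain ⟨w', hw'⟩ := hBne
        obtain ⟨w, -, hwA, hwB⟩ :=
          hconn.2 A (Ω \ A) hAopen hBopen hsub hAne ⟨w', hw'.1, hw'⟩
        exact (hwB.2 hwA).elim
      · intro z hz
        have hA : injE n I₀ z ∈ A := by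
          by_contra hA
          exact hBne ⟨injE n I₀ z, hz, hA⟩
        have hz' : z ∈ injE n I₀ ⁻¹' A := hA
        rwa [hApre I₀ hI₀] at hz'
    -- Step 3 : construct F
    have key : ∀ z : ℂ, ∃ p : (Fin (2 * n) → ℝ) × (Fin (2 * n) → ℝ),
        ∀ I ∈ C, injE n I z ∈ Ω → f (injE n I z) = p.1 + I p.2 := by
      intro z
      by_cases hz : z ∈ U
      · obtain ⟨x, γ, hγ⟩ := (hRmem z).mp (hUR hz)
        have him0 : (γ ⟨0, by norm_num⟩).im = 0 := by
          have h0 : γ ⟨0, by norm_num⟩ = ((x : ℂ)) := γ.source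
          rw [h0]
          exact Complex.ofReal_im x
        obtain ⟨F₁, F₂, hF⟩ := hps γ γ.continuous him0 ⟨I₀, hI₀, fun t => hγ t⟩
        refine ⟨(F₁, F₂), fun I hI hzΩ => ?_⟩
        have h1 := hF I hI fun t => hUax (γ t) (hγ t) I hI
        have h2 : γ ⟨1, by norm_num⟩ = z := γ.target
        rw [h2] at h1
        exact h1
      · exact ⟨(0, 0), fun I hI hzΩ => absurd (hUax' z I hI hzΩ) hz⟩
    choose F hF using key
    exact ⟨F, fun z I hI h => hF z I hI h⟩
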